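/- arXiv:2408.12001 — 2 statements merged into one kernel-verified Lean document; each statement's English description precedes it below -/
import Mathlib

section
/- For any valuation profile v, any bidder n ∈ {1,…,N}, any menu 𝓜 and any 1 ≤ k ≤ N, the k-th rank guarantee satisfies Rᵏ_𝓜(v) ≥ max_{X ∈ 𝓑(𝓜)} Σ_{b∈X} vⁿ_b − Σ_{b∈𝓜} max{vⁿ_b − v⁽ᵏ⁾_b, 0}. -/
open MeasureTheory
open scoped ENNReal BigOperators

namespace RankGuaranteedAuctions

/-- A bundle of items, where the set of items is `Fin M`. -/
abbrev Bundle (M : ℕ) := Finset (Fin M)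

/-- A valuation assigns a real value to every bundle. -/
abbrev Valuation (M : ℕ) := Bundle M → ℝ

/-- A valuation is normalized: value `0` for the empty bundle and values in `[0, vbar]`. -/
def IsValuation (M : ℕ) (vbar : ℝ) (v : Valuation M) : Prop :=
  v ∅ = 0 ∧ ∀ b : Bundle M, 0 ≤ v b ∧ v b ≤ vbar

/-- A menu is a nonempty collection of nonempty bundles. -/
def IsMenu (M : ℕ) (Menu : Finset (Bundle M)) : Prop :=
  Menu.Nonempty ∧ ∅ ∉ Menu

/-- The complete menu `2^S` of all nonempty bundles. -/
noncomputable def completeMenu (M : ℕ) : Finset (Bundle M) :=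
  Finset.univ.erase ∅

/-- A feasible allocation: a set of pairwise disjoint bundles from the menu. -/
def Feasible (M : ℕ) (Menu X : Finset (Bundle M)) : Prop :=
  X ⊆ Menu ∧ ∀ b ∈ X, ∀ b' ∈ X, b ≠ b' → Disjoint b b'

/-- The maximum of `∑ b ∈ X, f b` over feasible allocations `X` from the menu. -/
noncomputable def maxAlloc (M : ℕ) (Menu : Finset (Bundle M)) (f : Bundle M → ℝ) : ℝ :=
  sSup {y : ℝ | ∃ X : Finset (Bundle M), Feasible M Menu X ∧ y = ∑ b ∈ X, f b}

/-- The `k`-th highest value among `w 0, …, w (N-1)` (for `1 ≤ k ≤ N`):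
the maximum over sets `T` of `k` bidders of the minimum of `w` on `T`. -/
noncomputable def kthHighest (N : ℕ) (w : Fin N → ℝ) (k : ℕ) : ℝ :=
  sSup {x : ℝ | ∃ T : Finset (Fin N), T.card = k ∧ x = sInf (w '' (T : Set (Fin N)))}

/-- The `k`-th rank guarantee `R^k_𝓜(v)`. -/
noncomputable def rankGuarantee (M N : ℕ) (Menu : Finset (Bundle M))
    (v : Fin N → Valuation M) (k : ℕ) : ℝ :=
  maxAlloc M Menu fun b => kthHighest N (fun n => v n b) k

/-- The ex-post efficient surplus: the maximum over feasible allocations `X` with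
`|X| ≤ N` and injective assignments `ι` of bundles in `X` to bidders of the total value. -/
noncomputable def surplusEx (M N : ℕ) (Menu : Finset (Bundle M))
    (v : Fin N → Valuation M) : ℝ :=
  sSup {y : ℝ | ∃ X : Finset (Bundle M), Feasible M Menu X ∧ X.card ≤ N ∧
    ∃ ι : Bundle M → Fin N, Set.InjOn ι ↑X ∧ y = ∑ b ∈ X, v (ι b) b}

/-- The average `F̄ = (1/N) ∑ₙ Fₙ` of the bidder-marginals of `F`. -/
noncomputable def avgMarginal (M N : ℕ) (F : Measure (Fin N → Valuation M)) :
    Measure (Valuation M) :=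
  (N : ℝ≥0∞)⁻¹ • ∑ n : Fin N, F.map (fun v => v n)

/-- The ex-ante efficient surplus `V_𝓜(F)`. -/
noncomputable def Vsurplus (M N : ℕ) (Menu : Finset (Bundle M))
    (F : Measure (Fin N → Valuation M)) : ℝ :=
  ∫ v, surplusEx M N Menu v ∂F

/-- A Borel probability measure on valuation profiles (supported on profiles of
valuations bounded by `vbar`). -/
def ProfileOK (M N : ℕ) (vbar : ℝ) (F : Measure (Fin N → Valuation M)) : Prop :=
  IsProbabilityMeasure F ∧ F {v | ∀ n, IsValuation M vbar (v n)} = 1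

/-- A Borel probability measure on valuations (supported on valuations bounded by `vbar`). -/
def ValOK (M : ℕ) (vbar : ℝ) (G : Measure (Valuation M)) : Prop :=
  IsProbabilityMeasure G ∧ G {w | IsValuation M vbar w} = 1

/-- `κ` is a partition of the bundle `b` into nonempty, pairwise disjoint parts. -/
def IsPartitionOf (M : ℕ) (κ : Finset (Bundle M)) (b : Bundle M) : Prop :=
  (∀ c ∈ κ, c ≠ ∅) ∧ (∀ c ∈ κ, ∀ c' ∈ κ, c ≠ c' → Disjoint c c') ∧ κ.sup id = b

/-- Feasibility for homogeneous goods: total number of allocated items is at most `M`. -/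
def FeasibleQ (M : ℕ) (Menu X : Finset (Bundle M)) : Prop :=
  X ⊆ Menu ∧ ∑ b ∈ X, b.card ≤ M

/-- The maximum of `∑ b ∈ X, f b` over homogeneous-goods-feasible allocations `X`. -/
noncomputable def maxAllocQ (M : ℕ) (Menu : Finset (Bundle M)) (f : Bundle M → ℝ) : ℝ :=
  sSup {y : ℝ | ∃ X : Finset (Bundle M), FeasibleQ M Menu X ∧ y = ∑ b ∈ X, f b}

/-- An assignment of pairwise disjoint bundles to the `N` bidders. -/
def IsAssignment (M N : ℕ) (a : Fin N → Bundle M) : Prop :=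
  ∀ n n' : Fin N, n ≠ n' → Disjoint (a n) (a n')

/-- An assignment is efficient if it maximizes total value over all assignments. -/
def IsEfficient (M N : ℕ) (v : Fin N → Valuation M) (a : Fin N → Bundle M) : Prop :=
  IsAssignment M N a ∧
    ∀ a' : Fin N → Bundle M, IsAssignment M N a' → ∑ n, v n (a' n) ≤ ∑ n, v n (a n)

/-- The VCG revenue at the efficient assignment `a`: the sum over bidders `n` of
`max_{assignments to bidders other than n} ∑_{n' ≠ n} v^{n'} − ∑_{n' ≠ n} v^{n'}(a n')`. -/
noncomputable def vcgRevenue (M N : ℕ) (v : Fin N → Valuation M)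
    (a : Fin N → Bundle M) : ℝ :=
  ∑ n : Fin N,
    (sSup {y : ℝ | ∃ a' : Fin N → Bundle M, IsAssignment M N a' ∧ a' n = ∅ ∧
        y = ∑ n' ∈ Finset.univ.erase n, v n' (a' n')}
      - ∑ n' ∈ Finset.univ.erase n, v n' (a n'))

/-- An unbounded valuation: value `0` for the empty bundle and nonnegative values. -/
def IsValuationNN (M : ℕ) (v : Valuation M) : Prop :=
  v ∅ = 0 ∧ ∀ b : Bundle M, 0 ≤ v b

/-- The top-`(k-1)/N` quantile of `v b` under `G`. -/
noncomputable def quantileQ (M N k : ℕ) (G : Measure (Valuation M)) (b : Bundle M) : ℝ :=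
  sInf {q : ℝ | 0 ≤ q ∧ G {w | q < w b} ≤ ((k - 1 : ℕ) : ℝ≥0∞) / (N : ℝ≥0∞)}


/-- For any valuation profile `v`, bidder `n`, menu `𝓜` and `1 ≤ k ≤ N`,
`R^k_𝓜(v) ≥ max_{X ∈ 𝓑(𝓜)} ∑_{b∈X} vⁿ_b − ∑_{b∈𝓜} max{vⁿ_b − v^{(k)}_b, 0}`. -/
theorem rank_guarantee_single_bidder_bound
    (M N : ℕ) (hM : 1 ≤ M) (vbar : ℝ) (hvbar : 0 ≤ vbar)
    (v : Fin N → Valuation M) (hv : ∀ n, IsValuation M vbar (v n))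
    (Menu : Finset (Bundle M)) (hMenu : IsMenu M Menu)
    (n : Fin N) (k : ℕ) (hk1 : 1 ≤ k) (hkN : k ≤ N) :
    rankGuarantee M N Menu v k ≥
      maxAlloc M Menu (v n)
        - ∑ b ∈ Menu, max (v n b - kthHighest N (fun m => v m b) k) 0 := by
  have hbdd : ∀ f : Bundle M → ℝ, BddAbove
      {y : ℝ | ∃ X : Finset (Bundle M), Feasible M Menu X ∧ y = ∑ b ∈ X, f b} := by
    intro f
    apply Set.Finite.bddAbove
    apply Set.Finite.subset (Set.finite_range
      (fun X : Menu.powerset => ∑ b ∈ (X : Finset (Bundle M)), f b))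
    rintro y ⟨X, hX, rfl⟩
    exact ⟨⟨X, Finset.mem_powerset.mpr hX.1⟩, rfl⟩
  have hne : ∀ f : Bundle M → ℝ,
      {y : ℝ | ∃ X : Finset (Bundle M), Feasible M Menu X ∧ y = ∑ b ∈ X, f b}.Nonempty := by
    intro f
    exact ⟨0, ∅, ⟨Finset.empty_subset _, by simp⟩, by simp⟩
  rw [ge_iff_le, sub_le_iff_le_add]
  unfold maxAlloc
  apply csSup_le (hne _)
  rintro y ⟨X, hX, rfl⟩
  have h1 : ∑ b ∈ X, v n b ≤
      ∑ b ∈ X, (kthHighest N (fun m => v m b) k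
        + max (v n b - kthHighest N (fun m => v m b) k) 0) := by
    apply Finset.sum_le_sum
    intro b _
    have := le_max_left (v n b - kthHighest N (fun m => v m b) k) 0
    linarith
  rw [Finset.sum_add_distrib] at h1
  have h2 : ∑ b ∈ X, kthHighest N (fun m => v m b) k ≤ rankGuarantee M N Menu v k :=
    le_csSup (hbdd _) ⟨X, hX, rfl⟩
  have h3 : ∑ b ∈ X, max (v n b - kthHighest N (fun m => v m b) k) 0 ≤
      ∑ b ∈ Menu, max (v n b - kthHighest N (fun m => v m b) k) 0 :=
    Finset.sum_le_sum_of_subset_of_nonneg hX.1 (fun b _ _ => le_max_right _ _)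
  linarith

end RankGuaranteedAuctions
end

section
/- For any valuation profile v, any menu 𝓜 and any 1 ≤ k ≤ N, the k-th rank guarantee satisfies Rᵏ_𝓜(v) ≥ (1/N) Σ_{n=1}^{N} max_{X ∈ 𝓑(𝓜)} Σ_{b∈X} vⁿ_b − (k−1)·|𝓜|·v̄/N. -/
open MeasureTheory
open scoped ENNReal BigOperators

namespace RankGuaranteedAuctions

section AuxLemmas

variable {M : ℕ}

lemma feasible_empty (Menu : Finset (Bundle M)) : Feasible M Menu ∅ :=
  ⟨Finset.empty_subset _, by simp⟩

lemma maxAlloc_set_finite (Menu : Finset (Bundle M)) (f : Bundle M → ℝ) :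
    {y : ℝ | ∃ X : Finset (Bundle M), Feasible M Menu X ∧ y = ∑ b ∈ X, f b}.Finite :=
  Set.Finite.subset (Set.finite_range fun X : Finset (Bundle M) => ∑ b ∈ X, f b)
    (by rintro y ⟨X, _, rfl⟩; exact ⟨X, rfl⟩)

lemma maxAlloc_set_nonempty (Menu : Finset (Bundle M)) (f : Bundle M → ℝ) :
    {y : ℝ | ∃ X : Finset (Bundle M), Feasible M Menu X ∧ y = ∑ b ∈ X, f b}.Nonempty :=
  ⟨0, ∅, feasible_empty Menu, by simp⟩

lemma le_maxAlloc (Menu : Finset (Bundle M)) (f : Bundle M → ℝ)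
    {X : Finset (Bundle M)} (hX : Feasible M Menu X) :
    ∑ b ∈ X, f b ≤ maxAlloc M Menu f :=
  le_csSup (maxAlloc_set_finite Menu f).bddAbove ⟨X, hX, rfl⟩

lemma maxAlloc_mem (Menu : Finset (Bundle M)) (f : Bundle M → ℝ) :
    ∃ X : Finset (Bundle M), Feasible M Menu X ∧ maxAlloc M Menu f = ∑ b ∈ X, f b :=
  (maxAlloc_set_nonempty Menu f).csSup_mem (maxAlloc_set_finite Menu f)

lemma kth_set_finite (N k : ℕ) (w : Fin N → ℝ) :
    {x : ℝ | ∃ T : Finset (Fin N), T.card = k ∧ x = sInf (w '' (T : Set (Fin N)))}.Finite :=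
  Set.Finite.subset (Set.finite_range fun T : Finset (Fin N) => sInf (w '' (T : Set (Fin N))))
    (by rintro x ⟨T, _, rfl⟩; exact ⟨T, rfl⟩)

lemma sInf_image_mem {N : ℕ} (w : Fin N → ℝ) {T : Finset (Fin N)} (hT : T.Nonempty) :
    ∃ n ∈ T, sInf (w '' (T : Set (Fin N))) = w n := by
  have hfin : (w '' (T : Set (Fin N))).Finite := (T.finite_toSet).image w
  have hne : (w '' (T : Set (Fin N))).Nonempty :=
    (Finset.coe_nonempty.mpr hT).image w
  obtain ⟨n, hn, heq⟩ := hne.csInf_mem hfin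
  exact ⟨n, hn, heq.symm⟩

lemma le_kthHighest {N k : ℕ} (w : Fin N → ℝ) {T : Finset (Fin N)} (hT : T.card = k) :
    sInf (w '' (T : Set (Fin N))) ≤ kthHighest N w k :=
  le_csSup (kth_set_finite N k w).bddAbove ⟨T, hT, rfl⟩

lemma kthHighest_nonneg {N k : ℕ} (hk1 : 1 ≤ k) (hkN : k ≤ N)
    {w : Fin N → ℝ} (hw : ∀ n, 0 ≤ w n) : 0 ≤ kthHighest N w k := by
  obtain ⟨T, _, hTcard⟩ :=
    Finset.exists_subset_card_eq (s := (Finset.univ : Finset (Fin N))) (n := k) (by simpa using hkN)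
  have hTne : T.Nonempty := Finset.card_pos.mp (by omega)
  obtain ⟨n, _, heq⟩ := sInf_image_mem w hTne
  calc (0:ℝ) ≤ w n := hw n
    _ = sInf (w '' (T : Set (Fin N))) := heq.symm
    _ ≤ kthHighest N w k := le_kthHighest w hTcard

lemma card_filter_kth_lt {N k : ℕ} (hk1 : 1 ≤ k) (w : Fin N → ℝ) :
    (Finset.univ.filter fun n => kthHighest N w k < w n).card ≤ k - 1 := by
  by_contra h
  push_neg at h
  have hk' : k ≤ (Finset.univ.filter fun n => kthHighest N w k < w n).card := by omega
  obtain ⟨T, hTsub, hTcard⟩ := Finset.exists_subset_card_eq hk'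
  have hTne : T.Nonempty := Finset.card_pos.mp (by omega)
  obtain ⟨n, hnT, heq⟩ := sInf_image_mem w hTne
  have h1 : kthHighest N w k < w n := (Finset.mem_filter.mp (hTsub hnT)).2
  have h2 : w n ≤ kthHighest N w k := heq ▸ le_kthHighest w hTcard
  linarith

lemma sum_le_card_mul_kth {N k : ℕ} (hk1 : 1 ≤ k) (hkN : k ≤ N)
    {vbar : ℝ} (hvbar : 0 ≤ vbar) {w : Fin N → ℝ}
    (hw0 : ∀ n, 0 ≤ w n) (hw1 : ∀ n, w n ≤ vbar) (A : Finset (Fin N)) :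
    ∑ n ∈ A, w n ≤ ((k:ℝ) - 1) * vbar + (A.card : ℝ) * kthHighest N w k := by
  set K := kthHighest N w k with hKdef
  have hK0 : 0 ≤ K := kthHighest_nonneg hk1 hkN hw0
  have hsplit := Finset.sum_filter_add_sum_filter_not A (fun n => K < w n) w
  have h1 : ∑ n ∈ A.filter (fun n => K < w n), w n ≤ ((k:ℝ) - 1) * vbar := by
    have hcard : (A.filter (fun n => K < w n)).card ≤ k - 1 :=
      le_trans (Finset.card_le_card
        (Finset.filter_subset_filter _ (Finset.subset_univ A)))
        (card_filter_kth_lt hk1 w)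
    have hcard' : ((A.filter (fun n => K < w n)).card : ℝ) ≤ (k:ℝ) - 1 := by
      have := (Nat.cast_le (α := ℝ)).mpr hcard
      rw [Nat.cast_sub hk1] at this
      simpa using this
    calc ∑ n ∈ A.filter (fun n => K < w n), w n
        ≤ ∑ _n ∈ A.filter (fun n => K < w n), vbar :=
          Finset.sum_le_sum (fun n _ => hw1 n)
      _ = ((A.filter (fun n => K < w n)).card : ℝ) * vbar := by
          rw [Finset.sum_const, nsmul_eq_mul]
      _ ≤ ((k:ℝ) - 1) * vbar := mul_le_mul_of_nonneg_right hcard' hvbar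
  have h2 : ∑ n ∈ A.filter (fun n => ¬ K < w n), w n ≤ (A.card : ℝ) * K := by
    calc ∑ n ∈ A.filter (fun n => ¬ K < w n), w n
        ≤ ∑ _n ∈ A.filter (fun n => ¬ K < w n), K :=
          Finset.sum_le_sum (fun n hn => not_lt.mp (Finset.mem_filter.mp hn).2)
      _ = ((A.filter (fun n => ¬ K < w n)).card : ℝ) * K := by
          rw [Finset.sum_const, nsmul_eq_mul]
      _ ≤ (A.card : ℝ) * K := by
          apply mul_le_mul_of_nonneg_right _ hK0
          exact_mod_cast Finset.card_le_card (Finset.filter_subset _ A)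
  linarith

lemma sum_extend {α : Type*} [DecidableEq α] {s t : Finset α} (h : s ⊆ t) (g : α → ℝ) :
    ∑ b ∈ s, g b = ∑ b ∈ t, if b ∈ s then g b else 0 := by
  rw [Finset.sum_ite_mem, Finset.inter_eq_right.mpr h]

end AuxLemmas

/-- For any valuation profile `v`, menu `𝓜` and `1 ≤ k ≤ N`,
`R^k_𝓜(v) ≥ (1/N) ∑ₙ max_{X ∈ 𝓑(𝓜)} ∑_{b∈X} vⁿ_b − (k−1)·|𝓜|·v̄/N`. -/
theorem rank_guarantee_average_bound
    (M N : ℕ) (hM : 1 ≤ M) (vbar : ℝ) (hvbar : 0 ≤ vbar)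
    (v : Fin N → Valuation M) (hv : ∀ n, IsValuation M vbar (v n))
    (Menu : Finset (Bundle M)) (hMenu : IsMenu M Menu)
    (k : ℕ) (hk1 : 1 ≤ k) (hkN : k ≤ N) :
    rankGuarantee M N Menu v k ≥
      (1 / (N : ℝ)) * ∑ n : Fin N, maxAlloc M Menu (v n)
        - ((k : ℝ) - 1) * (Menu.card : ℝ) * vbar / (N : ℝ) := by
  classical
  have hN : 1 ≤ N := le_trans hk1 hkN
  have hNpos : (0:ℝ) < (N:ℝ) := by exact_mod_cast hN
  set K : Bundle M → ℝ := fun b => kthHighest N (fun n => v n b) k with hKdef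
  set R : ℝ := rankGuarantee M N Menu v k with hRdef
  -- choose optimal allocations for each bidder
  have hex : ∀ n : Fin N, ∃ X : Finset (Bundle M),
      Feasible M Menu X ∧ maxAlloc M Menu (v n) = ∑ b ∈ X, v n b :=
    fun n => maxAlloc_mem Menu (v n)
  choose X hXfeas hXval using hex
  -- the key inequality
  have key : ∑ n : Fin N, maxAlloc M Menu (v n)
      ≤ (Menu.card : ℝ) * (((k:ℝ) - 1) * vbar) + (N : ℝ) * R := by
    have step1 : ∑ n : Fin N, maxAlloc M Menu (v n)
        = ∑ b ∈ Menu, ∑ n ∈ Finset.univ.filter (fun n => b ∈ X n), v n b := by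
      calc ∑ n : Fin N, maxAlloc M Menu (v n)
          = ∑ n : Fin N, ∑ b ∈ X n, v n b := by
            exact Finset.sum_congr rfl (fun n _ => hXval n)
        _ = ∑ n : Fin N, ∑ b ∈ Menu, if b ∈ X n then v n b else 0 :=
            Finset.sum_congr rfl (fun n _ => sum_extend (hXfeas n).1 _)
        _ = ∑ b ∈ Menu, ∑ n : Fin N, if b ∈ X n then v n b else 0 := Finset.sum_comm
        _ = ∑ b ∈ Menu, ∑ n ∈ Finset.univ.filter (fun n => b ∈ X n), v n b := by
            exact Finset.sum_congr rfl (fun b _ => (Finset.sum_filter _ _).symm)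
    have step2 : ∀ b ∈ Menu,
        ∑ n ∈ Finset.univ.filter (fun n => b ∈ X n), v n b
          ≤ ((k:ℝ) - 1) * vbar
            + ((Finset.univ.filter (fun n => b ∈ X n)).card : ℝ) * K b := by
      intro b _
      exact sum_le_card_mul_kth hk1 hkN hvbar
        (fun n => (hv n).2 b |>.1) (fun n => (hv n).2 b |>.2) _
    have step3 : ∑ b ∈ Menu,
        ((Finset.univ.filter (fun n => b ∈ X n)).card : ℝ) * K b ≤ (N : ℝ) * R := by
      have e1 : ∀ b : Bundle M,
          ((Finset.univ.filter (fun n => b ∈ X n)).card : ℝ) * K b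
            = ∑ n : Fin N, if b ∈ X n then K b else 0 := by
        intro b
        rw [← Finset.sum_filter, Finset.sum_const, nsmul_eq_mul]
      calc ∑ b ∈ Menu, ((Finset.univ.filter (fun n => b ∈ X n)).card : ℝ) * K b
          = ∑ b ∈ Menu, ∑ n : Fin N, if b ∈ X n then K b else 0 :=
            Finset.sum_congr rfl (fun b _ => e1 b)
        _ = ∑ n : Fin N, ∑ b ∈ Menu, if b ∈ X n then K b else 0 := Finset.sum_comm
        _ = ∑ n : Fin N, ∑ b ∈ X n, K b :=
            Finset.sum_congr rfl (fun n _ => (sum_extend (hXfeas n).1 _).symm)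
        _ ≤ ∑ _n : Fin N, R :=
            Finset.sum_le_sum (fun n _ => le_maxAlloc Menu K (hXfeas n))
        _ = (N : ℝ) * R := by rw [Finset.sum_const, nsmul_eq_mul, Finset.card_univ,
            Fintype.card_fin]
    calc ∑ n : Fin N, maxAlloc M Menu (v n)
        = ∑ b ∈ Menu, ∑ n ∈ Finset.univ.filter (fun n => b ∈ X n), v n b := step1
      _ ≤ ∑ b ∈ Menu, (((k:ℝ) - 1) * vbar
            + ((Finset.univ.filter (fun n => b ∈ X n)).card : ℝ) * K b) :=
          Finset.sum_le_sum step2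
      _ = (Menu.card : ℝ) * (((k:ℝ) - 1) * vbar)
            + ∑ b ∈ Menu, ((Finset.univ.filter (fun n => b ∈ X n)).card : ℝ) * K b := by
          rw [Finset.sum_add_distrib, Finset.sum_const, nsmul_eq_mul]
      _ ≤ (Menu.card : ℝ) * (((k:ℝ) - 1) * vbar) + (N : ℝ) * R := by linarith [step3]
  -- final arithmetic
  rw [ge_iff_le, sub_le_iff_le_add, one_div, inv_mul_le_iff₀ hNpos]
  have : (N:ℝ) * (R + ((k:ℝ) - 1) * (Menu.card : ℝ) * vbar / (N : ℝ))
      = (N:ℝ) * R + ((k:ℝ) - 1) * (Menu.card : ℝ) * vbar := by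
    field_simp
  rw [this]
  linarith [key]

end RankGuaranteedAuctions
end
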